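/- arXiv:1502.04725 — 3 statements merged into one kernel-verified Lean document; each statement's English description precedes it below -/
import Mathlib

section
/- (Long-lasting riots from strong shocks.) Consider λ' = -ωλ + r(α)G(λ), α' = -h(λ)α with λ(0)=λ₀ > 0, α(0)=A, where G(z)=z(z₀-z), r is increasing with r(z)→1 as z→∞, h is bounded above by θ, and z₀·r(0) < ω < z₀. Let λ* = z₀ - ω be the positive equilibrium of y' = -ωy + G(y). Then for every δ > 0 and L > 0 there exist t₀ ≥ 0 and A₀ > 0 such that whenever A ≥ A₀, the solution satisfies λ(t) > λ* - δ for all t ∈ [t₀, t₀ + L]. -/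
open Real Filter Set

noncomputable def rfun (β a z : ℝ) : ℝ := 1 / (1 + Real.exp (-β * (z - a)))

noncomputable def hfun (θ p z : ℝ) : ℝ := θ / (1 + z) ^ p

noncomputable def Gfun (z₀ z : ℝ) : ℝ := z * (z₀ - z)

lemma ev_right {f g : ℝ → ℝ} {t a b : ℝ}
    (hf : HasDerivAt f a t) (hg : HasDerivAt g b t) (hab : b < a) (heq : f t = g t) :
    ∀ᶠ s in nhdsWithin t (Set.Ioi t), g s < f s := by
  have hd : HasDerivAt (fun s => f s - g s) (a - b) t := hf.sub hg
  have hslope := hasDerivAt_iff_tendsto_slope.1 hd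
  have h1 : ∀ᶠ s in nhdsWithin t {t}ᶜ, 0 < slope (fun s => f s - g s) t s :=
    hslope.eventually (eventually_gt_nhds (by linarith))
  have h2 : ∀ᶠ s in nhdsWithin t (Set.Ioi t), 0 < slope (fun s => f s - g s) t s :=
    h1.filter_mono (nhdsWithin_mono t (fun x hx => ne_of_gt hx))
  filter_upwards [h2, self_mem_nhdsWithin] with s hs hs'
  rw [slope_def_field] at hs
  have hst : (0:ℝ) < s - t := by simpa using sub_pos.2 (Set.mem_Ioi.1 hs')
  have : 0 < (f s - g s - (f t - g t)) := by
    have := mul_pos hs hst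
    rw [div_mul_cancel₀] at this
    · linarith
    · exact ne_of_gt hst
  rw [heq] at this
  linarith

lemma barrier {f g : ℝ → ℝ} {T : ℝ}
    (hfc : ∀ t ∈ Set.Icc (0:ℝ) T, ContinuousAt f t)
    (hgc : Continuous g)
    (h0 : g 0 ≤ f 0)
    (hkey : ∀ t, t ∈ Set.Ico (0:ℝ) T → f t = g t →
      ∀ᶠ s in nhdsWithin t (Set.Ioi t), g s < f s) :
    ∀ t ∈ Set.Icc (0:ℝ) T, g t ≤ f t := by
  by_contra hcon
  push_neg at hcon
  obtain ⟨t₁, ht₁, hft₁⟩ := hcon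
  set B : Set ℝ := {t ∈ Set.Icc (0:ℝ) T | f t < g t} with hB
  have hBne : B.Nonempty := ⟨t₁, ht₁, hft₁⟩
  have hBbd : BddBelow B := ⟨0, fun x hx => hx.1.1⟩
  set u := sInf B with hu
  have huclo : u ∈ closure B := csInf_mem_closure hBne hBbd
  have huIcc : u ∈ Set.Icc (0:ℝ) T :=
    isClosed_Icc.closure_subset (closure_mono (fun x hx => hx.1) huclo)
  have hfcu : ContinuousAt f u := hfc u huIcc
  have hnb : (nhdsWithin u B).NeBot := mem_closure_iff_nhdsWithin_neBot.1 huclo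
  have hle : f u ≤ g u := by
    have htend : Tendsto (fun s => f s - g s) (nhdsWithin u B) (nhds (f u - g u)) :=
      (hfcu.sub hgc.continuousAt).continuousWithinAt.tendsto
    have hev : ∀ᶠ s in nhdsWithin u B, f s - g s ≤ 0 := by
      filter_upwards [self_mem_nhdsWithin] with s hs
      linarith [hs.2]
    linarith [le_of_tendsto htend hev]
  have hlb : ∀ s, s ∈ Set.Icc (0:ℝ) T → s < u → g s ≤ f s := by
    intro s hs hsu
    by_contra h
    push_neg at h
    exact absurd (csInf_le hBbd ⟨hs, h⟩) (not_le.2 hsu)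
  have hge : g u ≤ f u := by
    rcases eq_or_lt_of_le huIcc.1 with h0u | h0u
    · rw [← h0u]; exact h0
    · have hne : (nhdsWithin u (Set.Iio u)).NeBot := inferInstance
      have htend : Tendsto (fun s => g s - f s) (nhdsWithin u (Set.Iio u))
          (nhds (g u - f u)) :=
        (hgc.continuousAt.sub hfcu).continuousWithinAt.tendsto
      have hpos : ∀ᶠ s in nhdsWithin u (Set.Iio u), (0:ℝ) < s :=
        (isOpen_Ioi.eventually_mem (show u ∈ Set.Ioi (0:ℝ) from h0u)).filter_mono
          nhdsWithin_le_nhds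
      have hev : ∀ᶠ s in nhdsWithin u (Set.Iio u), g s - f s ≤ 0 := by
        filter_upwards [self_mem_nhdsWithin, hpos] with s hs hs0
        have := hlb s ⟨le_of_lt hs0, le_trans (le_of_lt hs) huIcc.2⟩ hs
        linarith
      linarith [le_of_tendsto htend hev]
  have hfu : f u = g u := le_antisymm hle hge
  have huB : u ∉ B := fun h => absurd h.2 (not_lt.2 hge)
  have huT : u < T := by
    rcases lt_or_eq_of_le huIcc.2 with h | h
    · exact h
    · exfalso
      rcases hBne with ⟨x, hx⟩
      have hxu : u ≤ x := csInf_le hBbd hx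
      have hxT : x ≤ T := hx.1.2
      have hxu2 : x = u := le_antisymm (by rw [h]; exact hxT) hxu
      rw [hxu2] at hx
      exact huB hx
  have hev := hkey u ⟨huIcc.1, huT⟩ hfu
  have hBsub : B ⊆ Set.Ioi u := by
    intro x hx
    rcases lt_or_eq_of_le (csInf_le hBbd hx) with h | h
    · exact h
    · exact absurd (show u ∈ B by rw [hu, h]; exact hx) huB
  have hmono : nhdsWithin u B ≤ nhdsWithin u (Set.Ioi u) := nhdsWithin_mono u hBsub
  have hev2 : ∀ᶠ s in nhdsWithin u B, g s < f s := hev.filter_mono hmono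
  have hev3 : ∀ᶠ s in nhdsWithin u B, f s < g s := by
    filter_upwards [self_mem_nhdsWithin] with s hs; exact hs.2
  rcases (hev2.and hev3).exists with ⟨s, h1, h2⟩
  linarith

lemma linear_ode_repr {f φ : ℝ → ℝ}
    (hφ : Continuous φ)
    (hf : ∀ t, 0 ≤ t → HasDerivAt f (φ t * f t) t) :
    ∀ t, 0 ≤ t → f t = f 0 * Real.exp (∫ s in (0:ℝ)..t, φ s) := by
  have hF : ∀ t : ℝ, HasDerivAt (fun u => ∫ s in (0:ℝ)..u, φ s) (φ t) t := by
    intro t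
    exact intervalIntegral.integral_hasDerivAt_right
      (hφ.intervalIntegrable 0 t)
      (hφ.stronglyMeasurable.stronglyMeasurableAtFilter)
      hφ.continuousAt
  set F : ℝ → ℝ := fun u => ∫ s in (0:ℝ)..u, φ s with hFdef
  have hg : ∀ t, 0 ≤ t → HasDerivAt (fun u => f u * Real.exp (-F u)) 0 t := by
    intro t ht
    have h1 : HasDerivAt (fun u => Real.exp (-F u)) (-(φ t) * Real.exp (-F t)) t := by
      have := ((hF t).neg).exp
      simpa [mul_comm] using this
    have : HasDerivAt (fun u => f u * Real.exp (-F u))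
        (φ t * f t * Real.exp (-F t) + f t * (-φ t * Real.exp (-F t))) t := (hf t ht).mul h1
    convert this using 1
    ring
  intro t ht
  have hconst : f t * Real.exp (-F t) = f 0 * Real.exp (-F 0) := by
    rcases eq_or_lt_of_le ht with h | h
    · rw [← h]
    · have hcont : ContinuousOn (fun u => f u * Real.exp (-F u)) (Set.Icc 0 t) := by
        intro x hx
        exact (hg x hx.1).continuousAt.continuousWithinAt
      have := constant_of_has_deriv_right_zero hcont
        (fun x hx => ((hg x hx.1).hasDerivWithinAt)) t (Set.right_mem_Icc.2 ht)
      exact this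
  have hF0 : F 0 = 0 := by simp [hFdef]
  rw [hF0] at hconst
  simp at hconst
  have : f t = f 0 * Real.exp (F t) := by
    have hepos : Real.exp (-F t) ≠ 0 := Real.exp_ne_zero _
    rw [← hconst, mul_assoc, ← Real.exp_add, neg_add_cancel, Real.exp_zero, mul_one]
  exact this

lemma rfun_cont (β a : ℝ) : Continuous (rfun β a) := by
  unfold rfun
  apply Continuous.div continuous_const
  · fun_prop
  · intro z
    positivity

lemma rfun_ge {β a η : ℝ} (hβ : 0 < β) (hη : 0 < η) (hη1 : η < 1) :
    ∀ z, a + Real.log ((1 - η)/η) / β ≤ z → 1 - η ≤ rfun β a z := by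
  intro z hz
  have h1η : (0:ℝ) < 1 - η := by linarith
  have hq : (0:ℝ) < (1 - η)/η := by positivity
  have hexp : Real.exp (-β * (z - a)) ≤ η / (1 - η) := by
    have h1 : -β * (z - a) ≤ -Real.log ((1 - η)/η) := by
      have : Real.log ((1-η)/η) / β ≤ z - a := by linarith
      have := (div_le_iff₀ hβ).1 this
      nlinarith
    calc Real.exp (-β * (z - a)) ≤ Real.exp (-Real.log ((1-η)/η)) := Real.exp_le_exp.2 h1
      _ = η / (1 - η) := by
          rw [Real.exp_neg, Real.exp_log hq, inv_div]
  have hden : (0:ℝ) < 1 + Real.exp (-β * (z - a)) := by positivity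
  have hden2 : 1 + Real.exp (-β * (z - a)) ≤ 1 / (1 - η) := by
    have : 1 + η / (1 - η) = 1 / (1 - η) := by field_simp; ring
    linarith
  unfold rfun
  rw [le_div_iff₀ hden]
  have h3 : (1-η) * (1 + Real.exp (-β * (z - a))) ≤ (1-η) * (1/(1-η)) :=
    mul_le_mul_of_nonneg_left hden2 h1η.le
  have h4 : (1-η) * (1/(1-η)) = 1 := by field_simp
  linarith

lemma hfun_le {θ p z : ℝ} (hθ : 0 < θ) (hp : 0 ≤ p) (hz : 0 ≤ z) : hfun θ p z ≤ θ := by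
  unfold hfun
  have h1 : (1:ℝ) ≤ (1 + z) ^ p := Real.one_le_rpow (by linarith) hp
  calc θ / (1 + z) ^ p ≤ θ / 1 := by
        exact div_le_div_of_nonneg_left hθ.le one_pos h1
    _ = θ := div_one θ

/-- long-lasting riots from strong shocks.  For every `δ > 0` and `L > 0`
there are `t₀ ≥ 0` and `A₀ > 0` such that any solution issued from a shock of
amplitude `A ≥ A₀` stays above `λ* - δ` on `[t₀, t₀ + L]`, where `λ* = z₀ - ω`. -/
theorem riot_long_lasting_from_strong_shock
    (ω z₀ β a θ p lam₀ : ℝ)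
    (hω : 0 < ω) (hz₀ : 0 < z₀) (hβ : 0 < β) (ha : 0 < a)
    (hθ : 0 < θ) (hp : 0 < p) (hp1 : p ≤ 1)
    (hlow : z₀ * rfun β a 0 < ω) (hhigh : ω < z₀)
    (hlam₀ : 0 < lam₀) :
    ∀ δ > (0:ℝ), ∀ L > (0:ℝ), ∃ t₀ ≥ (0:ℝ), ∃ A₀ > (0:ℝ), ∀ A ≥ A₀,
      ∀ lam alp : ℝ → ℝ,
        lam 0 = lam₀ → alp 0 = A →
        (∀ t, 0 ≤ t →
          HasDerivAt lam (-ω * lam t + rfun β a (alp t) * Gfun z₀ (lam t)) t) →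
        (∀ t, 0 ≤ t →
          HasDerivAt alp (-(hfun θ p (lam t)) * alp t) t) →
        ∀ t ∈ Set.Icc t₀ (t₀ + L), lam t > (z₀ - ω) - δ := by
  intro δ hδ L hL
  have hzω : 0 < z₀ - ω := by linarith
  set δ' := min δ ((z₀ - ω)/2) with hδ'def
  have hδ'pos : 0 < δ' := lt_min hδ (by linarith)
  have hδ'le : δ' ≤ δ := min_le_left _ _
  have hδ'half : δ' ≤ (z₀ - ω)/2 := min_le_right _ _
  set m' := z₀ - ω - δ'/2 with hm'def
  have hm'pos : 0 < m' := by simp only [hm'def]; linarith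
  have hωδ : (0:ℝ) < ω + δ' := by linarith
  set η := δ' / (4*(ω+δ')) with hηdef
  have hηpos : 0 < η := by positivity
  have hη1 : η < 1 := by
    rw [hηdef, div_lt_one (by linarith)]
    linarith
  have hη4 : η * (ω + δ') = δ'/4 := by
    rw [hηdef]; field_simp
  set c := δ'/8 with hcdef
  have hcpos : 0 < c := by positivity
  set M := a + Real.log ((1-η)/η)/β with hMdef
  set t₀ := max 0 (Real.log (m'/lam₀)/c) with ht₀def
  have ht₀0 : (0:ℝ) ≤ t₀ := le_max_left _ _
  set T := t₀ + L with hTdef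
  have hT0 : (0:ℝ) ≤ T := by linarith
  set A₀ := max 1 (M * Real.exp (θ*T)) with hA₀def
  refine ⟨t₀, ht₀0, A₀, lt_of_lt_of_le one_pos (le_max_left _ _), ?_⟩
  intro A hA lam alp hlam0 halp0 hlamD halpD
  have hA1 : (1:ℝ) ≤ A := le_trans (le_max_left _ _) hA
  have hApos : (0:ℝ) < A := by linarith
  -- continuity of solutions at nonnegative times
  have hlamC : ∀ t, 0 ≤ t → ContinuousAt lam t := fun t ht => (hlamD t ht).continuousAt
  have halpC : ∀ t, 0 ≤ t → ContinuousAt alp t := fun t ht => (halpD t ht).continuousAt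
  have hmaxc : Continuous (fun s : ℝ => max s 0) := continuous_id.max continuous_const
  set ℓ : ℝ → ℝ := fun s => lam (max s 0) with hℓdef
  set aℓ : ℝ → ℝ := fun s => alp (max s 0) with haℓdef
  have hℓC : Continuous ℓ := continuous_iff_continuousAt.2 fun s =>
    ContinuousAt.comp (hlamC _ (le_max_right _ _)) hmaxc.continuousAt
  have haℓC : Continuous aℓ := continuous_iff_continuousAt.2 fun s =>
    ContinuousAt.comp (halpC _ (le_max_right _ _)) hmaxc.continuousAt
  -- representation of lam
  set φl : ℝ → ℝ := fun s => -ω + rfun β a (aℓ s) * (z₀ - ℓ s) with hφl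
  have hφlC : Continuous φl := by
    apply Continuous.add continuous_const
    exact ((rfun_cont β a).comp haℓC).mul (continuous_const.sub hℓC)
  have hlamrep : ∀ t, 0 ≤ t → lam t = lam₀ * Real.exp (∫ s in (0:ℝ)..t, φl s) := by
    intro t ht
    rw [← hlam0]
    refine linear_ode_repr hφlC (fun u hu => ?_) t ht
    have h := hlamD u hu
    convert h using 1
    simp only [hφl, hℓdef, haℓdef, max_eq_left hu, Gfun]
    ring
  have hlampos : ∀ t, 0 ≤ t → 0 < lam t := by
    intro t ht
    rw [hlamrep t ht]
    positivity
  have hℓpos : ∀ s, 0 < ℓ s := fun s => hlampos _ (le_max_right _ _)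
  -- representation of alp
  set φa : ℝ → ℝ := fun s => -(hfun θ p (ℓ s)) with hφa
  have hφaC : Continuous φa := by
    apply Continuous.neg
    apply continuous_iff_continuousAt.2
    intro s
    unfold hfun
    apply ContinuousAt.div continuousAt_const
    · exact ContinuousAt.comp
        (Real.continuousAt_rpow_const _ _ (Or.inl (by linarith [hℓpos s])))
        ((continuous_const.add hℓC).continuousAt)
    · have := hℓpos s
      positivity
  have halprep : ∀ t, 0 ≤ t → alp t = A * Real.exp (∫ s in (0:ℝ)..t, φa s) := by
    intro t ht
    rw [← halp0]
    refine linear_ode_repr hφaC (fun u hu => ?_) t ht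
    have h := halpD u hu
    convert h using 2
    simp only [hφa, hℓdef, max_eq_left hu]
  -- lower bound on alp and on rfun (alp t)
  have halow : ∀ t ∈ Set.Icc (0:ℝ) T, M ≤ alp t := by
    intro t ht
    have hint : -(θ * t) ≤ ∫ s in (0:ℝ)..t, φa s := by
      have h1 : ∫ s in (0:ℝ)..t, (-θ : ℝ) ≤ ∫ s in (0:ℝ)..t, φa s := by
        apply intervalIntegral.integral_mono_on ht.1
          (intervalIntegrable_const) (hφaC.intervalIntegrable 0 t)
        intro s _
        have : hfun θ p (ℓ s) ≤ θ := hfun_le hθ hp.le (hℓpos s).le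
        simp only [hφa]
        linarith
      rw [intervalIntegral.integral_const, smul_eq_mul, sub_zero] at h1
      linarith
    have hIT : -(θ * T) ≤ ∫ s in (0:ℝ)..t, φa s := by
      have : θ * t ≤ θ * T := mul_le_mul_of_nonneg_left ht.2 hθ.le
      linarith
    have h2 : A * Real.exp (-(θ*T)) ≤ alp t := by
      rw [halprep t ht.1]
      exact mul_le_mul_of_nonneg_left (Real.exp_le_exp.2 hIT) hApos.le
    have h3 : M * Real.exp (θ*T) ≤ A := le_trans (le_max_right _ _) hA
    have h4 : M ≤ A * Real.exp (-(θ*T)) := by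
      have := mul_le_mul_of_nonneg_right h3 (Real.exp_pos (-(θ*T))).le
      rwa [mul_assoc, ← Real.exp_add, add_neg_cancel, Real.exp_zero, mul_one] at this
    linarith
  have hrge : ∀ t ∈ Set.Icc (0:ℝ) T, 1 - η ≤ rfun β a (alp t) := by
    intro t ht
    exact rfun_ge hβ hηpos hη1 _ (halow t ht)
  -- key derivative lower bound
  have hkeyD : ∀ t ∈ Set.Icc (0:ℝ) T, lam t ≤ m' →
      2*c*lam t ≤ -ω * lam t + rfun β a (alp t) * Gfun z₀ (lam t) := by
    intro t ht hle
    have hr := hrge t ht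
    have hlp := hlampos t ht.1
    have h1 : ω + δ'/2 ≤ z₀ - lam t := by
      simp only [hm'def] at hle; linarith
    have h2 : (1-η)*(ω+δ'/2) ≤ rfun β a (alp t) * (z₀ - lam t) :=
      mul_le_mul hr h1 (by linarith) (by linarith)
    have h3 : 2*c ≤ -ω + rfun β a (alp t) * (z₀ - lam t) := by
      have h5 : η * (ω + δ'/2) ≤ η * (ω + δ') :=
        mul_le_mul_of_nonneg_left (by linarith) hηpos.le
      have h6 : (1-η)*(ω+δ'/2) = ω + δ'/2 - η*(ω+δ'/2) := by ring
      simp only [hcdef]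
      linarith [hη4]
    calc 2*c*lam t ≤ (-ω + rfun β a (alp t) * (z₀ - lam t)) * lam t :=
          mul_le_mul_of_nonneg_right h3 hlp.le
      _ = -ω * lam t + rfun β a (alp t) * Gfun z₀ (lam t) := by
          unfold Gfun; ring
  -- Phase 1 : exponential growth up to t₀
  have hphase1 : ∀ t ∈ Set.Icc (0:ℝ) t₀, lam₀ * Real.exp (c*t) ≤ lam t := by
    apply barrier (fun t ht => hlamC t ht.1) (by fun_prop) (by simp [hlam0])
    intro t ht heq
    have ht₀pos : 0 < t₀ := lt_of_le_of_lt ht.1 ht.2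
    have hxnn : 0 ≤ Real.log (m'/lam₀)/c := by
      by_contra h
      push_neg at h
      rw [ht₀def, max_eq_left h.le] at ht₀pos
      exact lt_irrefl _ ht₀pos
    have hx : t₀ = Real.log (m'/lam₀)/c := by
      rw [ht₀def, max_eq_right hxnn]
    have hexpt₀ : Real.exp (c*t₀) = m'/lam₀ := by
      rw [hx, mul_div_cancel₀ _ (ne_of_gt hcpos)]
      exact Real.exp_log (by positivity)
    have hlt : lam t < m' := by
      have h5 : Real.exp (c*t) < Real.exp (c*t₀) :=
        Real.exp_lt_exp.2 (mul_lt_mul_of_pos_left ht.2 hcpos)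
      calc lam t = lam₀ * Real.exp (c*t) := heq
        _ < lam₀ * Real.exp (c*t₀) := by
            exact mul_lt_mul_of_pos_left h5 hlam₀
        _ = m' := by rw [hexpt₀]; field_simp
    have htT : t ∈ Set.Icc (0:ℝ) T := ⟨ht.1, by simp only [hTdef]; linarith [ht.2.le]⟩
    have hD := hkeyD t htT hlt.le
    have hg : HasDerivAt (fun u => lam₀ * Real.exp (c*u)) (lam₀ * (Real.exp (c*t) * c)) t := by
      have h1 : HasDerivAt (fun u : ℝ => c*u) (c*1) t := (hasDerivAt_id t).const_mul c
      exact (h1.exp.const_mul lam₀).congr_deriv (by ring)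
    apply ev_right (hlamD t ht.1) hg ?_ heq
    have hc1 : lam₀ * (Real.exp (c*t) * c) = c * lam t := by rw [heq]; ring
    rw [hc1]
    have hlp := hlampos t ht.1
    linarith [mul_pos hcpos hlp, hD]
  have hstart : m' ≤ lam t₀ := by
    have hP := hphase1 t₀ ⟨ht₀0, le_refl _⟩
    rcases le_or_gt (Real.log (m'/lam₀)/c) 0 with h | h
    · have ht0 : t₀ = 0 := by rw [ht₀def, max_eq_left h]
      have hlog : Real.log (m'/lam₀) ≤ 0 := by
        by_contra hh
        push_neg at hh
        have : 0 < Real.log (m'/lam₀)/c := div_pos hh hcpos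
        linarith
      have hm'le : m' ≤ lam₀ := by
        have h6 : m'/lam₀ ≤ 1 := by
          by_contra hh
          push_neg at hh
          have := Real.log_pos hh
          linarith
        calc m' = (m'/lam₀) * lam₀ := by field_simp
          _ ≤ 1 * lam₀ := mul_le_mul_of_nonneg_right h6 hlam₀.le
          _ = lam₀ := one_mul _
      have : lam₀ * Real.exp (c*t₀) = lam₀ := by rw [ht0]; simp
      linarith [this ▸ hP]
    · have hx : t₀ = Real.log (m'/lam₀)/c := by rw [ht₀def, max_eq_right h.le]
      have hexpt₀ : Real.exp (c*t₀) = m'/lam₀ := by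
        rw [hx, mul_div_cancel₀ _ (ne_of_gt hcpos)]
        exact Real.exp_log (by positivity)
      have : lam₀ * Real.exp (c*t₀) = m' := by rw [hexpt₀]; field_simp
      linarith [this ▸ hP]
  -- Phase 2 : staying above m' on [t₀, t₀+L]
  have hphase2 : ∀ s ∈ Set.Icc (0:ℝ) L, m' ≤ lam (t₀ + s) := by
    apply barrier (f := fun s => lam (t₀+s)) (g := fun _ => m')
    · intro s hs
      exact ContinuousAt.comp (hlamC _ (by linarith [hs.1]))
        (continuous_const.add continuous_id).continuousAt
    · exact continuous_const
    · simpa using hstart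
    · intro s hs heq
      have hts : (0:ℝ) ≤ t₀ + s := by linarith [hs.1]
      have htT : t₀ + s ∈ Set.Icc (0:ℝ) T := ⟨hts, by simp only [hTdef]; linarith [hs.2]⟩
      have hD := hkeyD (t₀+s) htT (le_of_eq heq)
      have hf : HasDerivAt (fun u => lam (t₀+u))
          (-ω * lam (t₀+s) + rfun β a (alp (t₀+s)) * Gfun z₀ (lam (t₀+s))) s :=
        (hlamD (t₀+s) hts).comp_const_add t₀ s
      apply ev_right hf (hasDerivAt_const s m') ?_ heq
      have hlp := hlampos (t₀+s) hts
      linarith [mul_pos hcpos hlp, hD]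
  intro t ht
  have hs : t - t₀ ∈ Set.Icc (0:ℝ) L := ⟨by linarith [ht.1], by linarith [ht.2]⟩
  have hP := hphase2 (t-t₀) hs
  rw [add_sub_cancel] at hP
  have hm'δ : (z₀ - ω) - δ < m' := by
    simp only [hm'def]
    linarith
  linarith
end

section
/- (Monotone decrease of tension forces a single activity peak after crossing the nullcline.) Consider λ' = -ωλ + r(α)λ(z₀-λ), α' = -h(λ)α with λ(0) ∈ (0, z₀), α(0) > α_c, under the standing assumptions z₀ r(0) < ω < z₀, r strictly increasing, h > 0. Then α(t) is strictly decreasing for all t, and there exists a unique time t̂ ≥ 0 such that λ is nondecreasing on [0, t̂] and nonincreasing on [t̂, ∞) — namely the trajectory crosses the nullcline r(α)(z₀-λ)=ω exactly once from below. -/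
open Real Filter Set Topology


lemma aux_pos (f c b : ℝ → ℝ)
    (hfc : ContinuousOn f (Ici 0)) (hcc : ContinuousOn c (Ici 0))
    (hb : ∀ t ∈ Ici (0:ℝ), 0 ≤ b t)
    (hf0 : 0 < f 0)
    (hder : ∀ t ∈ Ici (0:ℝ), HasDerivAt f (c t * f t + b t) t) :
    ∀ t ∈ Ici (0:ℝ), 0 < f t := by
  intro T hT
  by_contra hT'
  push_neg at hT'
  have hIcc : Icc (0:ℝ) T ⊆ Ici 0 := Icc_subset_Ici_self
  set S : Set ℝ := Icc 0 T ∩ f ⁻¹' (Iic 0) with hS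
  have hSclosed : IsClosed S :=
    (hfc.mono hIcc).preimage_isClosed_of_isClosed isClosed_Icc isClosed_Iic
  have hSne : S.Nonempty := ⟨T, ⟨hT, le_refl T⟩, hT'⟩
  have hSbdd : BddBelow S := ⟨0, fun x hx => hx.1.1⟩
  set t₀ := sInf S with ht₀
  have ht₀S : t₀ ∈ S := hSclosed.csInf_mem hSne hSbdd
  have ht₀0 : 0 ≤ t₀ := ht₀S.1.1
  have ht₀le : f t₀ ≤ 0 := ht₀S.2
  have ht₀pos : 0 < t₀ := by
    rcases ht₀0.lt_or_eq with hlt | heq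
    · exact hlt
    · exfalso; rw [← heq] at ht₀le; linarith
  have hfpos : ∀ t ∈ Ico (0:ℝ) t₀, 0 < f t := by
    intro t ht
    by_contra hc
    push_neg at hc
    have : t ∈ S := ⟨⟨ht.1, ht.2.le.trans ht₀S.1.2⟩, hc⟩
    exact absurd (csInf_le hSbdd this) (not_le.mpr ht.2)
  have hIcc₀ : Icc (0:ℝ) t₀ ⊆ Ici 0 := Icc_subset_Ici_self
  obtain ⟨M, hM⟩ := (isCompact_Icc (a := (0:ℝ)) (b := t₀)).exists_bound_of_continuousOn
    (hcc.mono hIcc₀)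
  set F := fun t => f t * Real.exp (M * t) with hF
  have hFd : ∀ t ∈ Ici (0:ℝ), HasDerivAt F ((c t * f t + b t) * Real.exp (M * t)
      + f t * (Real.exp (M * t) * (M * 1))) t := by
    intro t ht
    exact (hder t ht).mul (((hasDerivAt_id t).const_mul M).exp)
  have hmono : MonotoneOn F (Icc 0 t₀) := by
    apply monotoneOn_of_hasDerivWithinAt_nonneg (convex_Icc 0 t₀)
      (f' := fun t => (c t * f t + b t) * Real.exp (M * t)
        + f t * (Real.exp (M * t) * (M * 1)))
    · exact (hfc.mono hIcc₀).mul
        (Real.continuous_exp.comp (continuous_const.mul continuous_id)).continuousOn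
    · intro x hx
      rw [interior_Icc] at hx
      exact ((hFd x (le_of_lt hx.1)).hasDerivWithinAt)
    · intro x hx
      rw [interior_Icc] at hx
      have hfx : 0 < f x := hfpos x ⟨hx.1.le, hx.2⟩
      have hcM : 0 ≤ c x + M := by
        have := abs_le.mp (hM x ⟨hx.1.le, hx.2.le⟩)
        simp only [Real.norm_eq_abs] at *
        have := abs_le.mp (hM x ⟨hx.1.le, hx.2.le⟩)
        linarith [this.1]
      have hbx : 0 ≤ b x := hb x (le_of_lt hx.1)
      have hE : 0 < Real.exp (M * x) := Real.exp_pos _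
      nlinarith [mul_nonneg (mul_nonneg hcM hfx.le) hE.le, mul_nonneg hbx hE.le]
  have h1 : F 0 ≤ F t₀ := hmono ⟨le_refl 0, ht₀0⟩ ⟨ht₀0, le_refl t₀⟩ ht₀0
  have h2 : F 0 = f 0 := by simp [hF]
  have hE : 0 < Real.exp (M * t₀) := Real.exp_pos _
  have : F t₀ ≤ 0 := mul_nonpos_of_nonpos_of_nonneg ht₀le hE.le
  linarith

/-- monotone decrease of the tension forces a single activity peak.
`α` is strictly decreasing, and there is a unique `t̂ ≥ 0` such that `λ` is
nondecreasing on `[0, t̂]` and nonincreasing on `[t̂, ∞)`. -/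
theorem riot_single_peak
    (ω z₀ αc : ℝ) (r h : ℝ → ℝ) (lam alp : ℝ → ℝ)
    (hω : 0 < ω) (hz₀ : 0 < z₀)
    (hrmono : StrictMono r) (hrcont : Continuous r)
    (hlow : z₀ * r 0 < ω) (hhigh : ω < z₀)
    (hαc : r αc = ω / z₀)
    (hh : ∀ z, 0 < h z) (hhcont : Continuous h)
    (hlam0 : lam 0 ∈ Set.Ioo 0 z₀) (halp0 : αc < alp 0) (halp0pos : 0 < alp 0)
    (hlamode : ∀ t, 0 ≤ t →
      HasDerivAt lam (-ω * lam t + r (alp t) * (lam t * (z₀ - lam t))) t)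
    (halpode : ∀ t, 0 ≤ t →
      HasDerivAt alp (-(h (lam t)) * alp t) t) :
    StrictAntiOn alp (Set.Ici 0) ∧
    ∃! th : ℝ, 0 ≤ th ∧ MonotoneOn lam (Set.Icc 0 th) ∧
      AntitoneOn lam (Set.Ici th) := by
  -- continuity
  have cont_lam : ContinuousOn lam (Ici 0) :=
    fun t ht => ((hlamode t ht).continuousAt).continuousWithinAt
  have cont_alp : ContinuousOn alp (Ici 0) :=
    fun t ht => ((halpode t ht).continuousAt).continuousWithinAt
  -- positivity of alp
  have alp_pos : ∀ t ∈ Ici (0:ℝ), 0 < alp t := by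
    apply aux_pos alp (fun t => -(h (lam t))) (fun _ => 0) cont_alp
      ((hhcont.comp_continuousOn cont_lam).neg) (fun _ _ => le_refl 0) halp0pos
    intro t ht
    simpa using halpode t ht
  -- positivity of lam
  set g : ℝ → ℝ := fun t => -ω + r (alp t) * (z₀ - lam t) with hg
  have g_cont : ContinuousOn g (Ici 0) :=
    continuousOn_const.add ((hrcont.comp_continuousOn cont_alp).mul
      (continuousOn_const.sub cont_lam))
  have lam_deriv : ∀ t ∈ Ici (0:ℝ), HasDerivAt lam (g t * lam t) t := by
    intro t ht
    convert hlamode t ht using 1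
    simp only [hg]; ring
  have lam_pos : ∀ t ∈ Ici (0:ℝ), 0 < lam t := by
    apply aux_pos lam g (fun _ => 0) cont_lam g_cont (fun _ _ => le_refl 0) hlam0.1
    intro t ht
    simpa using lam_deriv t ht
  -- lam < z₀
  have lam_lt : ∀ t ∈ Ici (0:ℝ), lam t < z₀ := by
    have := aux_pos (fun t => z₀ - lam t) (fun t => -(r (alp t) * lam t))
      (fun t => ω * lam t)
      (continuousOn_const.sub cont_lam)
      (((hrcont.comp_continuousOn cont_alp).mul cont_lam).neg)
      (fun t ht => (mul_pos hω (lam_pos t ht)).le)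
      (by simpa using hlam0.2)
      (by
        intro t ht
        have h1 : HasDerivAt (fun t => z₀ - lam t)
            (-(-ω * lam t + r (alp t) * (lam t * (z₀ - lam t)))) t :=
          (hlamode t ht).const_sub z₀
        convert h1 using 1
        ring)
    intro t ht
    have h2 := this t ht
    linarith
  -- alp strictly decreasing
  have alp_anti : StrictAntiOn alp (Ici 0) := by
    apply strictAntiOn_of_deriv_neg (convex_Ici 0) cont_alp
    intro x hx
    rw [interior_Ici] at hx
    rw [(halpode x hx.le).deriv]
    exact mul_neg_of_neg_of_pos (neg_neg_of_pos (hh _)) (alp_pos x (mem_Ici.mpr hx.le))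
  refine ⟨alp_anti, ?_⟩
  -- persistence of g ≤ 0
  have persist : ∀ t₁ t₂ : ℝ, 0 ≤ t₁ → t₁ ≤ t₂ → g t₁ ≤ 0 → g t₂ ≤ 0 := by
    intro t₁ t₂ ht₁ h12 hg1
    by_contra hpos
    push_neg at hpos
    have hlt : t₁ < t₂ := by
      rcases h12.lt_or_eq with hlt | heq
      · exact hlt
      · exfalso; rw [heq] at hg1; linarith
    set A : Set ℝ := Icc t₁ t₂ ∩ g ⁻¹' (Iic 0) with hA
    have hsub : Icc t₁ t₂ ⊆ Ici 0 := fun x hx => le_trans ht₁ hx.1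
    have hAclosed : IsClosed A :=
      (g_cont.mono hsub).preimage_isClosed_of_isClosed isClosed_Icc isClosed_Iic
    have hAne : A.Nonempty := ⟨t₁, ⟨le_refl _, h12⟩, hg1⟩
    have hAbdd : BddAbove A := ⟨t₂, fun x hx => hx.1.2⟩
    set ts := sSup A with hts
    have htsA : ts ∈ A := hAclosed.csSup_mem hAne hAbdd
    have hts0 : 0 ≤ ts := le_trans ht₁ htsA.1.1
    have htslt : ts < t₂ := by
      rcases htsA.1.2.lt_or_eq with hlt | heq
      · exact hlt
      · exfalso; have := htsA.2; rw [heq] at this; exact absurd hpos (not_lt.mpr this)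
    have hgpos : ∀ t ∈ Ioc ts t₂, 0 < g t := by
      intro t ht
      by_contra hc
      push_neg at hc
      have : t ∈ A := ⟨⟨le_trans htsA.1.1 ht.1.le, ht.2⟩, hc⟩
      exact absurd (le_csSup hAbdd this) (not_le.mpr ht.1)
    have hmono : MonotoneOn lam (Icc ts t₂) := by
      apply monotoneOn_of_hasDerivWithinAt_nonneg (convex_Icc ts t₂)
        (f' := fun t => g t * lam t)
        (cont_lam.mono (fun x hx => le_trans hts0 hx.1))
      · intro x hx
        rw [interior_Icc] at hx
        exact (lam_deriv x (le_trans hts0 hx.1.le)).hasDerivWithinAt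
      · intro x hx
        rw [interior_Icc] at hx
        exact mul_nonneg (hgpos x ⟨hx.1, hx.2.le⟩).le
          (lam_pos x (le_trans hts0 hx.1.le)).le
    have hlamle : lam ts ≤ lam t₂ :=
      hmono ⟨le_refl _, htslt.le⟩ ⟨htslt.le, le_refl _⟩ htslt.le
    have hα : alp t₂ < alp ts := alp_anti hts0 (le_trans hts0 htslt.le) htslt
    have hr : r (alp t₂) < r (alp ts) := hrmono hα
    have hz2 : 0 < z₀ - lam t₂ := by linarith [lam_lt t₂ (le_trans hts0 htslt.le)]
    have hg2 : 0 < -ω + r (alp t₂) * (z₀ - lam t₂) := hpos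
    have hgs : -ω + r (alp ts) * (z₀ - lam ts) ≤ 0 := htsA.2
    have hrpos : 0 < r (alp t₂) := by
      by_contra hcon
      push_neg at hcon
      nlinarith
    nlinarith [mul_pos (sub_pos.mpr hr) hz2,
      mul_nonneg (le_of_lt (lt_trans hrpos hr)) (sub_nonneg.mpr hlamle)]
  -- existence of a point with g ≤ 0
  have exists_np : ∃ t, 0 ≤ t ∧ g t ≤ 0 := by
    by_contra hc
    push_neg at hc
    have hgpos : ∀ t, 0 ≤ t → 0 < g t := hc
    have lam_mono : MonotoneOn lam (Ici 0) := by
      apply monotoneOn_of_hasDerivWithinAt_nonneg (convex_Ici 0)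
        (f' := fun t => g t * lam t) cont_lam
      · intro x hx
        rw [interior_Ici] at hx
        exact (lam_deriv x (mem_Ici.mpr hx.le)).hasDerivWithinAt
      · intro x hx
        rw [interior_Ici] at hx
        exact mul_nonneg (hgpos x hx.le).le (lam_pos x (mem_Ici.mpr hx.le)).le
    -- min of h on [lam 0, z₀]
    have hne : lam 0 ≤ z₀ := hlam0.2.le
    obtain ⟨x₀, hx₀K, hx₀min⟩ := isCompact_Icc.exists_isMinOn
      (⟨lam 0, le_refl _, hne⟩ : (Icc (lam 0) z₀).Nonempty) hhcont.continuousOn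
    set m := h x₀ with hm
    have hmpos : 0 < m := hh x₀
    have hmle : ∀ t, 0 ≤ t → m ≤ h (lam t) := by
      intro t ht
      exact hx₀min ⟨lam_mono (self_mem_Ici) ht ht, (lam_lt t ht).le⟩
    -- F = alp * exp (m t) antitone
    have hanti : AntitoneOn (fun t => alp t * Real.exp (m * t)) (Ici 0) := by
      apply antitoneOn_of_hasDerivWithinAt_nonpos (convex_Ici 0)
        (f' := fun t => -(h (lam t)) * alp t * Real.exp (m * t)
          + alp t * (Real.exp (m * t) * (m * 1)))
      · exact cont_alp.mul
          (Real.continuous_exp.comp (continuous_const.mul continuous_id)).continuousOn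
      · intro x hx
        rw [interior_Ici] at hx
        exact ((halpode x hx.le).mul (((hasDerivAt_id x).const_mul m).exp)).hasDerivWithinAt
      · intro x hx
        rw [interior_Ici] at hx
        have h1 : 0 < alp x := alp_pos x (mem_Ici.mpr hx.le)
        have h2 : m ≤ h (lam x) := hmle x hx.le
        have hE : 0 < Real.exp (m * x) := Real.exp_pos _
        nlinarith [mul_nonneg (mul_nonneg (sub_nonneg.mpr h2) h1.le) hE.le]
    have hbound : ∀ t, 0 ≤ t → alp t ≤ alp 0 * Real.exp (-(m * t)) := by
      intro t ht
      have h1 := hanti self_mem_Ici ht ht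
      simp only [mul_zero, Real.exp_zero, mul_one] at h1
      rw [Real.exp_neg, ← div_eq_mul_inv]
      exact (le_div_iff₀ (Real.exp_pos _)).mpr h1
    -- find δ with z₀ * r δ < ω
    have hδ : ∃ δ : ℝ, 0 < δ ∧ z₀ * r δ < ω := by
      have htend : Tendsto (fun d => z₀ * r d) (𝓝 0) (𝓝 (z₀ * r 0)) :=
        (hrcont.tendsto 0).const_mul z₀
      have hev : ∀ᶠ d in 𝓝 (0:ℝ), z₀ * r d < ω := htend.eventually_lt_const hlow
      rcases Metric.eventually_nhds_iff.mp hev with ⟨ε, hε, hball⟩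
      have hd : dist (ε/2) (0:ℝ) < ε := by
        rw [Real.dist_eq, sub_zero, abs_of_pos (by linarith)]
        linarith
      exact ⟨ε/2, by linarith, hball hd⟩
    obtain ⟨δ, hδpos, hδω⟩ := hδ
    -- find T with alp T < δ
    have htend0 : Tendsto (fun T => alp 0 * Real.exp (-(m * T))) atTop (𝓝 0) := by
      have h1 : Tendsto (fun T : ℝ => -(m * T)) atTop atBot := by
        apply Filter.tendsto_neg_atBot_iff.mpr
        exact Tendsto.const_mul_atTop hmpos tendsto_id
      have h2 : Tendsto (fun T : ℝ => Real.exp (-(m * T))) atTop (𝓝 0) :=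
        Real.tendsto_exp_atBot.comp h1
      simpa using h2.const_mul (alp 0)
    obtain ⟨T, hTδ, hT0⟩ :=
      ((htend0.eventually_lt_const hδpos).and (eventually_ge_atTop (0:ℝ))).exists
    have halpT : alp T < δ := lt_of_le_of_lt (hbound T hT0) hTδ
    have hgT : 0 < -ω + r (alp T) * (z₀ - lam T) := hgpos T hT0
    have hzT : 0 < z₀ - lam T := by linarith [lam_lt T hT0]
    rcases le_or_gt (r (alp T)) 0 with hcon | hposr
    · nlinarith [mul_nonpos_of_nonpos_of_nonneg hcon hzT.le]
    · nlinarith [mul_pos hposr (lam_pos T hT0),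
        mul_lt_mul_of_pos_left (hrmono halpT) hz₀]
  -- define th
  obtain ⟨t₂, ht₂0, ht₂g⟩ := exists_np
  set S : Set ℝ := Ici 0 ∩ g ⁻¹' (Iic 0) with hSdef
  have hSclosed : IsClosed S :=
    g_cont.preimage_isClosed_of_isClosed isClosed_Ici isClosed_Iic
  have hSne : S.Nonempty := ⟨t₂, ht₂0, ht₂g⟩
  have hSbdd : BddBelow S := ⟨0, fun x hx => hx.1⟩
  set th := sInf S with hth
  have hthS : th ∈ S := hSclosed.csInf_mem hSne hSbdd
  have hth0 : 0 ≤ th := hthS.1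
  have hthg : g th ≤ 0 := hthS.2
  have hbefore : ∀ t, 0 ≤ t → t < th → 0 < g t := by
    intro t ht htlt
    by_contra hc
    push_neg at hc
    exact absurd (csInf_le hSbdd ⟨ht, hc⟩) (not_le.mpr htlt)
  have hmonoth : MonotoneOn lam (Icc 0 th) := by
    apply monotoneOn_of_hasDerivWithinAt_nonneg (convex_Icc 0 th)
      (f' := fun t => g t * lam t) (cont_lam.mono Icc_subset_Ici_self)
    · intro x hx
      rw [interior_Icc] at hx
      exact (lam_deriv x hx.1.le).hasDerivWithinAt
    · intro x hx
      rw [interior_Icc] at hx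
      exact mul_nonneg (hbefore x hx.1.le hx.2).le (lam_pos x hx.1.le).le
  have hantith : AntitoneOn lam (Ici th) := by
    apply antitoneOn_of_hasDerivWithinAt_nonpos (convex_Ici th)
      (f' := fun t => g t * lam t) (cont_lam.mono (Ici_subset_Ici.mpr hth0))
    · intro x hx
      rw [interior_Ici] at hx
      exact (lam_deriv x (le_trans hth0 hx.le)).hasDerivWithinAt
    · intro x hx
      rw [interior_Ici] at hx
      exact mul_nonpos_of_nonpos_of_nonneg (persist th x hth0 hx.le hthg)
        (lam_pos x (le_trans hth0 hx.le)).le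
  -- no nontrivial interval of constancy
  have noconst : ∀ a b : ℝ, 0 ≤ a → a < b → (∀ t ∈ Icc a b, lam t = lam a) → False := by
    intro a b ha hab hconst
    have key : ∀ t, a < t → t < b → g t = 0 := by
      intro t hat htb
      have hnb : Ioo a b ∈ 𝓝 t := Ioo_mem_nhds hat htb
      have hev : lam =ᶠ[𝓝 t] fun _ => lam a :=
        eventually_of_mem hnb (fun x hx => hconst x ⟨hx.1.le, hx.2.le⟩)
      have hd0 : HasDerivAt lam 0 t :=
        (hasDerivAt_const t (lam a)).congr_of_eventuallyEq hev
      have ht0 : (0:ℝ) ≤ t := le_trans ha hat.le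
      have := (lam_deriv t ht0).unique hd0
      have hlpos := lam_pos t ht0
      rcases mul_eq_zero.mp this with h1 | h1
      · exact h1
      · exact absurd h1 (ne_of_gt hlpos)
    set t₁ := a + (b - a)/3 with ht₁def
    set t₂' := a + 2*(b - a)/3 with ht₂def
    have h1 : a < t₁ := by simp only [ht₁def]; linarith
    have h2 : t₁ < t₂' := by simp only [ht₁def, ht₂def]; linarith
    have h3 : t₂' < b := by simp only [ht₂def]; linarith
    have hg1 : g t₁ = 0 := key t₁ h1 (h2.trans h3)
    have hg2 : g t₂' = 0 := key t₂' (h1.trans h2) h3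
    have hl1 : lam t₁ = lam a := hconst t₁ ⟨h1.le, (h2.trans h3).le⟩
    have hl2 : lam t₂' = lam a := hconst t₂' ⟨(h1.trans h2).le, h3.le⟩
    have hαlt : alp t₂' < alp t₁ := alp_anti (le_trans ha h1.le) (le_trans ha (h1.trans h2).le) h2
    have hrlt : r (alp t₂') < r (alp t₁) := hrmono hαlt
    have hza : 0 < z₀ - lam a := by linarith [lam_lt a ha]
    have e1 : -ω + r (alp t₁) * (z₀ - lam a) = 0 := by rw [← hl1]; exact hg1
    have e2 : -ω + r (alp t₂') * (z₀ - lam a) = 0 := by rw [← hl2]; exact hg2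
    nlinarith [mul_pos (sub_pos.mpr hrlt) hza]
  -- conclude
  refine ⟨th, ⟨hth0, hmonoth, hantith⟩, ?_⟩
  rintro th' ⟨hth'0, hmon', hant'⟩
  rcases lt_trichotomy th' th with hlt | heq | hgt
  · exfalso
    apply noconst th' th hth'0 hlt
    intro t htmem
    have hub : lam t ≤ lam th' := hant' self_mem_Ici htmem.1 htmem.1
    have hlb : lam th' ≤ lam t :=
      hmonoth ⟨hth'0, hlt.le⟩ ⟨le_trans hth'0 htmem.1, htmem.2⟩ htmem.1
    linarith
  · exact heq
  · exfalso
    apply noconst th th' hth0 hgt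
    intro t htmem
    have hub : lam t ≤ lam th := hantith self_mem_Ici htmem.1 htmem.1
    have hlb : lam th ≤ lam t :=
      hmon' ⟨hth0, hgt.le⟩ ⟨le_trans hth0 htmem.1, htmem.2⟩ htmem.1
    linarith
end

section
/- (Invariant region.) For the planar system λ' = -ω(λ-λ_b) + r(α)λ(z₀-λ), α' = θα_b - h(λ)α, with ω, θ > 0, 0 ≤ λ_b < z₀, α_b ≥ 0, r : ℝ → (0,1), h : ℝ → (0, θ], the rectangle R = [0, z₀] × [0, M] with M := θα_b / inf_{λ∈[0,z₀]} h(λ) (augmented so that M ≥ α(0)) is forward invariant: if (λ(0), α(0)) ∈ R then (λ(t), α(t)) ∈ R for all t ≥ 0. -/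
open Real Filter Set

/-- the rectangle `[0, z₀] × [0, M]` is forward invariant for the
planar system `λ' = -ω(λ-λ_b) + r(α) λ (z₀-λ)`, `α' = θα_b - h(λ)α`, provided
`M ≥ α(0)` and `h(λ) M ≥ θ α_b` on `[0, z₀]`. -/
theorem riot_invariant_region
    (ω θ z₀ lamb αb M : ℝ) (r h : ℝ → ℝ) (lam alp : ℝ → ℝ)
    (hω : 0 < ω) (hθ : 0 < θ) (hlamb : 0 ≤ lamb) (hlambz : lamb < z₀)
    (hαb : 0 ≤ αb)
    (hr : ∀ z, 0 < r z ∧ r z < 1)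
    (hh : ∀ z, 0 < h z ∧ h z ≤ θ)
    (hM0 : alp 0 ≤ M)
    (hM : ∀ l ∈ Set.Icc (0:ℝ) z₀, θ * αb ≤ h l * M)
    (hlamode : ∀ t, 0 ≤ t →
      HasDerivAt lam (-ω * (lam t - lamb) + r (alp t) * (lam t * (z₀ - lam t))) t)
    (halpode : ∀ t, 0 ≤ t →
      HasDerivAt alp (θ * αb - h (lam t) * alp t) t)
    (hinit : lam 0 ∈ Set.Icc 0 z₀ ∧ alp 0 ∈ Set.Icc 0 M) :
    ∀ t, 0 ≤ t → lam t ∈ Set.Icc 0 z₀ ∧ alp t ∈ Set.Icc 0 M := by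
  obtain ⟨⟨hl0, hlz⟩, ha0, haM⟩ := hinit
  have hz0 : 0 < z₀ := lt_of_le_of_lt hlamb hlambz
  have hlamc : ∀ T : ℝ, ContinuousOn lam (Icc 0 T) := fun T x hx =>
    (hlamode x hx.1).continuousAt.continuousWithinAt
  have halpc : ∀ T : ℝ, ContinuousOn alp (Icc 0 T) := fun T x hx =>
    (halpode x hx.1).continuousAt.continuousWithinAt
  -- Step 1: lam t ≤ z₀
  have hub : ∀ t, 0 ≤ t → lam t ≤ z₀ := by
    intro T hT
    have key := image_le_of_deriv_right_lt_deriv_boundary (a := 0) (b := T)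
      (f := lam)
      (f' := fun t => -ω * (lam t - lamb) + r (alp t) * (lam t * (z₀ - lam t)))
      (B := fun _ => z₀) (B' := fun _ => 0)
      (hlamc T) (fun x hx => (hlamode x hx.1).hasDerivWithinAt) hlz
      (fun x => hasDerivAt_const x z₀)
      (by
        intro x hx hcontact
        simp only [hcontact]
        nlinarith)
    exact key (right_mem_Icc.2 hT)
  -- Step 2: 0 ≤ lam t
  have hlb : ∀ t, 0 ≤ t → 0 ≤ lam t := by
    intro T hT
    rw [← neg_nonpos]
    refine le_of_forall_pos_le_add ?_
    intro δ hδ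
    set K : ℝ := z₀ + 1 with hK
    have hKpos : 0 < K := by positivity
    set ε : ℝ := min δ 1 * Real.exp (-(K * T)) with hε
    have hεpos : 0 < ε := by positivity
    have key := image_le_of_deriv_right_lt_deriv_boundary (a := 0) (b := T)
      (f := fun t => -lam t)
      (f' := fun t => -(-ω * (lam t - lamb) + r (alp t) * (lam t * (z₀ - lam t))))
      (B := fun t => ε * Real.exp (K * t))
      (B' := fun t => ε * (Real.exp (K * t) * K))
      ((hlamc T).neg) (fun x hx => ((hlamode x hx.1).neg).hasDerivWithinAt)
      (by
        simp only [mul_zero, Real.exp_zero, mul_one]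
        linarith)
      (fun x => by simpa using (((hasDerivAt_id x).const_mul K).exp).const_mul ε)
      (by
        intro x hx hcontact
        set Bx : ℝ := ε * Real.exp (K * x) with hBx
        have hBpos : 0 < Bx := by positivity
        have hB1 : Bx ≤ 1 := by
          have h1 : Real.exp (K * x) ≤ Real.exp (K * T) :=
            Real.exp_le_exp.2 (by nlinarith [hx.2])
          have h2 : min δ 1 ≤ 1 := min_le_right _ _
          have h3 : Real.exp (-(K * T)) * Real.exp (K * T) = 1 := by
            rw [← Real.exp_add]; simp
          have h4 : min δ 1 * Real.exp (-(K * T)) * Real.exp (K * x)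
              ≤ 1 * (Real.exp (-(K * T)) * Real.exp (K * T)) := by
            have := Real.exp_pos (-(K * T))
            nlinarith [Real.exp_pos (K * x)]
          rw [hBx, hε]
          calc min δ 1 * Real.exp (-(K * T)) * Real.exp (K * x)
              ≤ 1 * (Real.exp (-(K * T)) * Real.exp (K * T)) := h4
            _ = 1 := by rw [h3, one_mul]
        have hlamx : lam x = -Bx := by
          have : -lam x = Bx := hcontact
          linarith
        obtain ⟨hr0, hr1⟩ := hr (alp x)
        rw [hlamx]
        have : -(-ω * (-Bx - lamb) + r (alp x) * (-Bx * (z₀ - -Bx)))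
            = -(ω * Bx) - ω * lamb + r (alp x) * (Bx * (z₀ + Bx)) := by ring
        rw [this]
        have hgoal : -(ω * Bx) - ω * lamb + r (alp x) * (Bx * (z₀ + Bx)) < Bx * K := by
          have hX : 0 < Bx * (z₀ + Bx) := by positivity
          have h5 : r (alp x) * (Bx * (z₀ + Bx)) < Bx * (z₀ + Bx) :=
            (mul_lt_iff_lt_one_left hX).2 hr1
          have h6 : Bx * (z₀ + Bx) ≤ Bx * (z₀ + 1) := by nlinarith
          nlinarith
        have hBK : ε * (Real.exp (K * x) * K) = Bx * K := by
          rw [hBx]; ring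
        rw [hBK]
        exact hgoal)
    have hfin := key (right_mem_Icc.2 hT)
    have h3 : Real.exp (-(K * T)) * Real.exp (K * T) = 1 := by
      rw [← Real.exp_add]; simp
    have : ε * Real.exp (K * T) = min δ 1 := by
      rw [hε, mul_assoc, h3, mul_one]
    rw [this] at hfin
    calc -lam T ≤ min δ 1 := hfin
      _ ≤ δ := min_le_left _ _
      _ = 0 + δ := by ring
  -- Step 3: 0 ≤ alp t
  have halb : ∀ t, 0 ≤ t → 0 ≤ alp t := by
    intro T hT
    rw [← neg_nonpos]
    refine le_of_forall_pos_le_add ?_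
    intro δ hδ
    have key := image_le_of_deriv_right_lt_deriv_boundary (a := 0) (b := T)
      (f := fun t => -alp t)
      (f' := fun t => -(θ * αb - h (lam t) * alp t))
      (B := fun _ => δ) (B' := fun _ => 0)
      ((halpc T).neg) (fun x hx => ((halpode x hx.1).neg).hasDerivWithinAt)
      (by linarith)
      (fun x => hasDerivAt_const x δ)
      (by
        intro x hx hcontact
        have halpx : alp x = -δ := by
          have : -alp x = δ := hcontact
          linarith
        obtain ⟨hh0, hh1⟩ := hh (lam x)
        rw [halpx]
        have : -(θ * αb - h (lam x) * -δ) = -(θ * αb) - h (lam x) * δ := by ring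
        rw [this]
        nlinarith)
    have := key (right_mem_Icc.2 hT)
    linarith
  -- Step 4: alp t ≤ M
  have hM0' : 0 ≤ M := le_trans ha0 haM
  have haub : ∀ t, 0 ≤ t → alp t ≤ M := by
    intro T hT
    refine le_of_forall_pos_le_add ?_
    intro δ hδ
    have key := image_le_of_deriv_right_lt_deriv_boundary (a := 0) (b := T)
      (f := alp)
      (f' := fun t => θ * αb - h (lam t) * alp t)
      (B := fun _ => M + δ) (B' := fun _ => 0)
      (halpc T) (fun x hx => (halpode x hx.1).hasDerivWithinAt)
      (by linarith)
      (fun x => hasDerivAt_const x (M + δ))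
      (by
        intro x hx hcontact
        obtain ⟨hh0, hh1⟩ := hh (lam x)
        have hmem : lam x ∈ Icc (0:ℝ) z₀ := ⟨hlb x hx.1, hub x hx.1⟩
        have := hM (lam x) hmem
        rw [hcontact]
        nlinarith)
    exact key (right_mem_Icc.2 hT)
  intro t ht
  exact ⟨⟨hlb t ht, hub t ht⟩, halb t ht, haub t ht⟩
end
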